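/- arXiv:2411.11071 — 3 statements merged into one kernel-verified Lean document; each statement's English description precedes it below -/
import Mathlib

section
/- Let Ω be a finite subset of vertices of a locally finite graph G, and let l be a positive integer. For every f : Ω → ℂ, ⟨(Δ_Ω^{l,D})² f, f⟩_Ω ≤ ⟨Δ_Ω^{2l,D} f, f⟩_Ω, where Δ_Ω^{m,D} f := (Δ^m f*)|_Ω and f* is the zero extension. -/
open Finset

variable {V : Type*}

noncomputable def graphLap (G : SimpleGraph V) [DecidableRel G.Adj] [G.LocallyFinite]
    (f : V → ℂ) : V → ℂ :=
  fun x => ∑ y ∈ G.neighborFinset x, (f y - f x)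

noncomputable def extZero [DecidableEq V] (Ω : Finset V) (f : V → ℂ) : V → ℂ :=
  fun x => if x ∈ Ω then f x else 0

noncomputable def dirichletPolyLap [DecidableEq V] (G : SimpleGraph V) [DecidableRel G.Adj]
    [G.LocallyFinite] (Ω : Finset V) (l : ℕ) (f : V → ℂ) : V → ℂ :=
  (graphLap G)^[l] (extZero Ω f)

noncomputable def innerOmega (Ω : Finset V) (f g : V → ℂ) : ℂ :=
  ∑ x ∈ Ω, f x * (starRingEnd ℂ) (g x)

section aux

variable [DecidableEq V] (G : SimpleGraph V) [DecidableRel G.Adj] [G.LocallyFinite]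

noncomputable def grow (S : Finset V) : Finset V := S ∪ S.biUnion (fun v => G.neighborFinset v)

lemma subset_grow (S : Finset V) : S ⊆ grow G S := Finset.subset_union_left

lemma subset_grow_iter (S : Finset V) (l : ℕ) : S ⊆ (grow G)^[l] S := by
  induction l with
  | zero => simp
  | succ l ih =>
    rw [Function.iterate_succ_apply']
    exact ih.trans (subset_grow G _)

lemma graphLap_support (S : Finset V) (u : V → ℂ) (hu : ∀ x ∉ S, u x = 0) :
    ∀ x ∉ grow G S, graphLap G u x = 0 := by
  intro x hx
  have hxS : x ∉ S := fun h => hx (subset_grow G S h)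
  have h0 : ∀ y ∈ G.neighborFinset x, u y = 0 := by
    intro y hy
    by_contra h
    have hyS : y ∈ S := by by_contra h'; exact h (hu y h')
    apply hx
    apply Finset.mem_union_right
    rw [SimpleGraph.mem_neighborFinset] at hy
    exact Finset.mem_biUnion.2 ⟨y, hyS, (SimpleGraph.mem_neighborFinset G y x).2 hy.symm⟩
  unfold graphLap
  calc ∑ y ∈ G.neighborFinset x, (u y - u x)
      = ∑ y ∈ G.neighborFinset x, (0:ℂ) := by
        refine Finset.sum_congr rfl fun y hy => ?_
        rw [h0 y hy, hu x hxS, sub_zero]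
    _ = 0 := by simp

lemma graphLap_iter_support (S : Finset V) (u : V → ℂ) (hu : ∀ x ∉ S, u x = 0) (l : ℕ) :
    ∀ x ∉ (grow G)^[l] S, (graphLap G)^[l] u x = 0 := by
  induction l generalizing S u with
  | zero => simpa using hu
  | succ l ih =>
    intro x hx
    rw [Function.iterate_succ_apply']
    rw [Function.iterate_succ_apply'] at hx
    exact graphLap_support G _ _ (ih S u hu) x hx

lemma nbr_sum_filter (T : Finset V) (F : V → V → ℂ) (hF : ∀ x y, y ∉ T → F x y = 0) (x : V) :
    ∑ y ∈ G.neighborFinset x, F x y = ∑ y ∈ T, if G.Adj x y then F x y else 0 := by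
  rw [← Finset.sum_filter]
  rw [← Finset.sum_subset (Finset.inter_subset_left (s₂ := T) (s₁ := G.neighborFinset x))]
  · apply Finset.sum_congr
    · ext y
      simp only [Finset.mem_inter, Finset.mem_filter, SimpleGraph.mem_neighborFinset]
      tauto
    · intros; rfl
  · intro y hy hy'
    apply hF
    intro hyT
    exact hy' (Finset.mem_inter.2 ⟨hy, hyT⟩)

lemma cross_symm (T : Finset V) (u v : V → ℂ) (hu : ∀ x ∉ T, u x = 0)
    (hv : ∀ x ∉ T, v x = 0) :
    ∑ x ∈ T, ∑ y ∈ G.neighborFinset x, u y * (starRingEnd ℂ) (v x)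
      = ∑ x ∈ T, ∑ y ∈ G.neighborFinset x, u x * (starRingEnd ℂ) (v y) := by
  have h1 : ∀ x ∈ T, ∑ y ∈ G.neighborFinset x, u y * (starRingEnd ℂ) (v x)
      = ∑ y ∈ T, if G.Adj x y then u y * (starRingEnd ℂ) (v x) else 0 := fun x _ =>
    nbr_sum_filter G T (fun x y => u y * (starRingEnd ℂ) (v x))
      (fun x y hy => by simp [hu y hy]) x
  have h2 : ∀ x ∈ T, ∑ y ∈ G.neighborFinset x, u x * (starRingEnd ℂ) (v y)
      = ∑ y ∈ T, if G.Adj x y then u x * (starRingEnd ℂ) (v y) else 0 := fun x _ =>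
    nbr_sum_filter G T (fun x y => u x * (starRingEnd ℂ) (v y))
      (fun x y hy => by simp [hv y hy]) x
  rw [Finset.sum_congr rfl h1, Finset.sum_congr rfl h2, Finset.sum_comm]
  apply Finset.sum_congr rfl
  intro x _
  apply Finset.sum_congr rfl
  intro y _
  by_cases h : G.Adj x y
  · rw [if_pos h, if_pos h.symm]
  · rw [if_neg h, if_neg (fun h' => h h'.symm)]

lemma sym_finset (T : Finset V) (u v : V → ℂ) (hu : ∀ x ∉ T, u x = 0)
    (hv : ∀ x ∉ T, v x = 0) :
    ∑ x ∈ T, graphLap G u x * (starRingEnd ℂ) (v x)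
      = ∑ x ∈ T, u x * (starRingEnd ℂ) (graphLap G v x) := by
  unfold graphLap
  have e1 : ∀ x, (∑ y ∈ G.neighborFinset x, (u y - u x)) * (starRingEnd ℂ) (v x)
      = (∑ y ∈ G.neighborFinset x, u y * (starRingEnd ℂ) (v x))
        - (∑ y ∈ G.neighborFinset x, u x * (starRingEnd ℂ) (v x)) := by
    intro x
    rw [← Finset.sum_sub_distrib, Finset.sum_mul]
    apply Finset.sum_congr rfl
    intros; ring
  have e2 : ∀ x, u x * (starRingEnd ℂ) (∑ y ∈ G.neighborFinset x, (v y - v x))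
      = (∑ y ∈ G.neighborFinset x, u x * (starRingEnd ℂ) (v y))
        - (∑ y ∈ G.neighborFinset x, u x * (starRingEnd ℂ) (v x)) := by
    intro x
    rw [map_sum, Finset.mul_sum, ← Finset.sum_sub_distrib]
    apply Finset.sum_congr rfl
    intros; rw [map_sub]; ring
  rw [Finset.sum_congr rfl (fun x _ => e1 x), Finset.sum_congr rfl (fun x _ => e2 x),
    Finset.sum_sub_distrib, Finset.sum_sub_distrib, cross_symm G T u v hu hv]

lemma sym_finsum_one (u v : V → ℂ) (A B : Finset V) (hu : ∀ x ∉ A, u x = 0)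
    (hv : ∀ x ∉ B, v x = 0) :
    ∑ᶠ x, graphLap G u x * (starRingEnd ℂ) (v x)
      = ∑ᶠ x, u x * (starRingEnd ℂ) (graphLap G v x) := by
  set T : Finset V := A ∪ B with hT
  have hu' : ∀ x ∉ T, u x = 0 := fun x hx => hu x (fun h => hx (Finset.mem_union_left _ h))
  have hv' : ∀ x ∉ T, v x = 0 := fun x hx => hv x (fun h => hx (Finset.mem_union_right _ h))
  rw [finsum_eq_finset_sum_of_support_subset _ (s := T)
      (fun x hx => by by_contra h; exact hx (by simp [hv' x h]))]
  rw [finsum_eq_finset_sum_of_support_subset _ (s := T)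
      (fun x hx => by by_contra h; exact hx (by simp [hu' x h]))]
  exact sym_finset G T u v hu' hv'

lemma sym_finsum_iter (l : ℕ) : ∀ (u v : V → ℂ) (A B : Finset V),
    (∀ x ∉ A, u x = 0) → (∀ x ∉ B, v x = 0) →
    ∑ᶠ x, (graphLap G)^[l] u x * (starRingEnd ℂ) (v x)
      = ∑ᶠ x, u x * (starRingEnd ℂ) ((graphLap G)^[l] v x) := by
  induction l with
  | zero => intro u v A B hu hv; rfl
  | succ l ih =>
    intro u v A B hu hv
    have step1 : ∑ᶠ x, (graphLap G)^[l+1] u x * (starRingEnd ℂ) (v x)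
        = ∑ᶠ x, graphLap G u x * (starRingEnd ℂ) ((graphLap G)^[l] v x) := by
      simp only [Function.iterate_succ_apply]
      exact ih (graphLap G u) v (grow G A) B (graphLap_support G A u hu) hv
    rw [step1, sym_finsum_one G u _ A ((grow G)^[l] B) hu
      (graphLap_iter_support G B v hv l)]
    simp only [Function.iterate_succ_apply']

end aux

section main

variable [DecidableEq V] (G : SimpleGraph V) [DecidableRel G.Adj] [G.LocallyFinite]

lemma extZero_support (Ω : Finset V) (g : V → ℂ) : ∀ x ∉ Ω, extZero Ω g x = 0 :=
  fun x hx => by simp [extZero, hx]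

lemma innerOmega_eq_finsum (Ω : Finset V) (w f : V → ℂ) :
    innerOmega Ω w f = ∑ᶠ x, w x * (starRingEnd ℂ) (extZero Ω f x) := by
  rw [finsum_eq_finset_sum_of_support_subset _ (s := Ω)
      (fun x hx => by by_contra h; exact hx (by simp [extZero_support Ω f x h]))]
  unfold innerOmega
  refine Finset.sum_congr rfl fun x hx => ?_
  simp [extZero, hx]

end main

/-- `⟨(Δ_Ω^{l,D})² f, f⟩_Ω ≤ ⟨Δ_Ω^{2l,D} f, f⟩_Ω` (both sides are real numbers). -/
theorem stmt_7 [DecidableEq V] (G : SimpleGraph V) [DecidableRel G.Adj] [G.LocallyFinite]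
    (Ω : Finset V) (l : ℕ) (hl : 0 < l) (f : V → ℂ) :
    (innerOmega Ω (dirichletPolyLap G Ω l (dirichletPolyLap G Ω l f)) f).re
      ≤ (innerOmega Ω (dirichletPolyLap G Ω (2 * l) f) f).re := by
  set F : V → ℂ := extZero Ω f with hF
  set g : V → ℂ := (graphLap G)^[l] F with hg
  have hFsupp : ∀ x ∉ Ω, F x = 0 := extZero_support Ω f
  have hgsupp : ∀ x ∉ (grow G)^[l] Ω, g x = 0 := graphLap_iter_support G Ω F hFsupp l
  have husupp : ∀ x ∉ Ω, extZero Ω g x = 0 := extZero_support Ω g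
  -- LHS
  have hLHS : innerOmega Ω (dirichletPolyLap G Ω l (dirichletPolyLap G Ω l f)) f
      = ∑ x ∈ Ω, g x * (starRingEnd ℂ) (g x) := by
    rw [innerOmega_eq_finsum]
    show ∑ᶠ x, (graphLap G)^[l] (extZero Ω g) x * (starRingEnd ℂ) (F x) = _
    rw [sym_finsum_iter G l (extZero Ω g) F Ω Ω husupp hFsupp]
    rw [finsum_eq_finset_sum_of_support_subset _ (s := Ω)
      (fun x hx => by by_contra h; exact hx (by simp [husupp x h]))]
    refine Finset.sum_congr rfl fun x hx => ?_
    simp [extZero, hx, ← hg]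
  -- RHS
  have hRHS : innerOmega Ω (dirichletPolyLap G Ω (2 * l) f) f
      = ∑ x ∈ (grow G)^[l] Ω, g x * (starRingEnd ℂ) (g x) := by
    rw [innerOmega_eq_finsum]
    have h2l : dirichletPolyLap G Ω (2 * l) f = (graphLap G)^[l] g := by
      unfold dirichletPolyLap
      rw [hg, hF, two_mul, Function.iterate_add_apply]
    rw [h2l, sym_finsum_iter G l g F ((grow G)^[l] Ω) Ω hgsupp hFsupp]
    rw [finsum_eq_finset_sum_of_support_subset _ (s := (grow G)^[l] Ω)
      (fun x hx => by by_contra h; exact hx (by simp [hgsupp x h]))]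
  rw [hLHS, hRHS, Complex.re_sum, Complex.re_sum]
  refine Finset.sum_le_sum_of_subset_of_nonneg (subset_grow_iter G Ω l) fun x _ _ => ?_
  rw [Complex.mul_conj]
  simpa using Complex.normSq_nonneg (g x)
end

section
/- Let Ω be a finite subset of vertices of a locally finite graph G, l a positive integer, and let λ_k^l, λ_k^{2l} denote the k-th smallest eigenvalues of (-1)^l Δ_Ω^{l,D} and Δ_Ω^{2l,D} respectively. Then for all 1 ≤ k ≤ |Ω|, (λ_k^l)² ≤ λ_k^{2l}. -/
open Finset

variable {V : Type*}

/-- The (real-valued) quadratic form `⟨(-1)^l Δ_Ω^{l,D} f, f⟩_Ω`. -/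
noncomputable def dirichletEnergy [DecidableEq V] (G : SimpleGraph V) [DecidableRel G.Adj]
    [G.LocallyFinite] (Ω : Finset V) (l : ℕ) (f : V → ℂ) : ℝ :=
  (innerOmega Ω (fun x => (-1 : ℂ) ^ l * dirichletPolyLap G Ω l f x) f).re

/-- The `k`-th smallest Dirichlet eigenvalue of `(-1)^l Δ_Ω^{l,D}` (counted with
multiplicity, `k = 1, …, |Ω|`), characterized via the min-max principle. -/
noncomputable def dirichletEigenvalue [DecidableEq V] (G : SimpleGraph V) [DecidableRel G.Adj]
    [G.LocallyFinite] (Ω : Finset V) (l : ℕ) (k : ℕ) : ℝ :=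
  sInf { r | ∃ M : Submodule ℂ (V → ℂ), Module.finrank ℂ M = k ∧
    (∀ f ∈ M, ∀ x ∉ Ω, f x = 0) ∧
    r = sSup { t | ∃ f ∈ M, (∑ x ∈ Ω, Complex.normSq (f x)) = 1 ∧
      t = dirichletEnergy G Ω l f } }

section Aux
variable [DecidableEq V] (G : SimpleGraph V) [DecidableRel G.Adj] [G.LocallyFinite]
  (Ω : Finset V)

lemma lap_conv (S : Finset V) (F : V → V → ℂ) (hF : ∀ x, ∀ y, y ∉ S → F x y = 0) (x : V) :
    ∑ y ∈ G.neighborFinset x, F x y = ∑ y ∈ S, if G.Adj x y then F x y else 0 := by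
  have h1 : S.filter (fun y => G.Adj x y) = S ∩ G.neighborFinset x := by
    ext y; simp [SimpleGraph.mem_neighborFinset]
  rw [Finset.sum_ite, Finset.sum_const_zero, add_zero, h1]
  exact (Finset.sum_subset (Finset.inter_subset_right)
    (fun y hy hy' => hF x y fun hS => hy' (Finset.mem_inter.2 ⟨hS, hy⟩))).symm

lemma lap_selfadj (S : Finset V) (g h : V → ℂ) (hg : ∀ x ∉ S, g x = 0)
    (hh : ∀ x ∉ S, h x = 0) :
    ∑ x ∈ S, graphLap G g x * (starRingEnd ℂ) (h x)
      = ∑ x ∈ S, g x * (starRingEnd ℂ) (graphLap G h x) := by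
  have key : ∑ x ∈ S, ∑ y ∈ G.neighborFinset x, g y * (starRingEnd ℂ) (h x)
      = ∑ x ∈ S, ∑ y ∈ G.neighborFinset x, g x * (starRingEnd ℂ) (h y) := by
    have e1 : ∀ x ∈ S, ∑ y ∈ G.neighborFinset x, g y * (starRingEnd ℂ) (h x)
        = ∑ y ∈ S, if G.Adj x y then g y * (starRingEnd ℂ) (h x) else 0 := fun x _ =>
      lap_conv G S (fun x y => g y * (starRingEnd ℂ) (h x))
        (fun x y hy => by simp [hg y hy]) x
    have e2 : ∀ x ∈ S, ∑ y ∈ G.neighborFinset x, g x * (starRingEnd ℂ) (h y)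
        = ∑ y ∈ S, if G.Adj x y then g x * (starRingEnd ℂ) (h y) else 0 := fun x _ =>
      lap_conv G S (fun x y => g x * (starRingEnd ℂ) (h y))
        (fun x y hy => by simp [hh y hy]) x
    rw [Finset.sum_congr rfl e1, Finset.sum_congr rfl e2, Finset.sum_comm]
    refine Finset.sum_congr rfl fun x _ => Finset.sum_congr rfl fun y _ => ?_
    exact if_congr (G.adj_comm x y).symm rfl rfl
  simp only [graphLap, Finset.sum_mul, ← Finset.mul_sum, map_sum, map_sub,
    Finset.sum_sub_distrib, sub_mul, mul_sub]
  rw [key]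
  simp [Finset.mul_sum]

lemma lap_neg_re (S : Finset V) (g : V → ℂ) (hg : ∀ x ∉ S, g x = 0) :
    (∑ x ∈ S, graphLap G g x * (starRingEnd ℂ) (g x)).re ≤ 0 := by
  have hterm : ∀ a b : ℂ, (a * (starRingEnd ℂ) b).re
      ≤ Complex.normSq a / 2 + Complex.normSq b / 2 := by
    intro a b
    calc (a * (starRingEnd ℂ) b).re ≤ ‖a * (starRingEnd ℂ) b‖ :=
          Complex.re_le_norm _
      _ = ‖a‖ * ‖b‖ := by rw [norm_mul, Complex.norm_conj]
      _ ≤ Complex.normSq a / 2 + Complex.normSq b / 2 := by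
          rw [← Complex.sq_norm, ← Complex.sq_norm]
          nlinarith [two_mul_le_add_sq ‖a‖ ‖b‖]
  have expand : ∑ x ∈ S, graphLap G g x * (starRingEnd ℂ) (g x)
      = (∑ x ∈ S, ∑ y ∈ S, if G.Adj x y then g y * (starRingEnd ℂ) (g x) else 0)
        - ∑ x ∈ S, ((G.neighborFinset x).card : ℂ) * (g x * (starRingEnd ℂ) (g x)) := by
    rw [← Finset.sum_sub_distrib]
    refine Finset.sum_congr rfl fun x hx => ?_
    rw [← lap_conv G S (fun x y => g y * (starRingEnd ℂ) (g x))
      (fun x y hy => by simp [hg y hy]) x]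
    simp only [graphLap, Finset.sum_mul, sub_mul, Finset.sum_sub_distrib,
      Finset.sum_const, nsmul_eq_mul]
    ring
  rw [expand, Complex.sub_re, Complex.re_sum, Complex.re_sum, sub_nonpos]
  have step1 : ∑ x ∈ S, (∑ y ∈ S, if G.Adj x y then g y * (starRingEnd ℂ) (g x) else 0).re
      ≤ ∑ x ∈ S, ∑ y ∈ S, (if G.Adj x y then
          Complex.normSq (g y) / 2 + Complex.normSq (g x) / 2 else 0) := by
    refine Finset.sum_le_sum fun x _ => ?_
    rw [Complex.re_sum]
    refine Finset.sum_le_sum fun y _ => ?_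
    by_cases hxy : G.Adj x y
    · simp only [if_pos hxy]; exact hterm _ _
    · simp [hxy]
  refine step1.trans ?_
  have split : ∑ x ∈ S, ∑ y ∈ S, (if G.Adj x y then
        Complex.normSq (g y) / 2 + Complex.normSq (g x) / 2 else 0)
      = ∑ x ∈ S, ∑ y ∈ S, (if G.Adj x y then Complex.normSq (g x) else 0) := by
    have h2 : ∀ x y : V, (if G.Adj x y then
        Complex.normSq (g y) / 2 + Complex.normSq (g x) / 2 else 0)
        = (if G.Adj x y then Complex.normSq (g y) / 2 else 0)
          + (if G.Adj x y then Complex.normSq (g x) / 2 else 0) := by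
      intro x y; by_cases hxy : G.Adj x y <;> simp [hxy]
    simp only [h2, Finset.sum_add_distrib]
    have h3 : ∑ x ∈ S, ∑ y ∈ S, (if G.Adj x y then Complex.normSq (g y) / 2 else 0)
        = ∑ x ∈ S, ∑ y ∈ S, (if G.Adj x y then Complex.normSq (g x) / 2 else 0) := by
      rw [Finset.sum_comm]
      exact Finset.sum_congr rfl fun x _ => Finset.sum_congr rfl fun y _ =>
        if_congr (G.adj_comm x y).symm rfl rfl
    rw [h3, ← Finset.sum_add_distrib]
    refine Finset.sum_congr rfl fun x _ => ?_
    rw [← Finset.sum_add_distrib]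
    refine Finset.sum_congr rfl fun y _ => ?_
    by_cases hxy : G.Adj x y <;> simp [hxy, add_halves]
  rw [split]
  refine Finset.sum_le_sum fun x _ => ?_
  rw [Finset.sum_ite, Finset.sum_const_zero, add_zero, Finset.sum_const, nsmul_eq_mul]
  have hcard : (S.filter (fun y => G.Adj x y)).card ≤ (G.neighborFinset x).card :=
    Finset.card_le_card fun y hy => by
      simpa [SimpleGraph.mem_neighborFinset] using (Finset.mem_filter.1 hy).2
  have : ((G.neighborFinset x).card : ℂ) * (g x * (starRingEnd ℂ) (g x))
      = (((G.neighborFinset x).card : ℝ) * Complex.normSq (g x) : ℝ) := by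
    rw [Complex.mul_conj]; push_cast; ring
  rw [this, Complex.ofReal_re]
  have hnn := Complex.normSq_nonneg (g x)
  calc ((S.filter (fun y => G.Adj x y)).card : ℝ) * Complex.normSq (g x)
      ≤ ((G.neighborFinset x).card : ℝ) * Complex.normSq (g x) := by
        apply mul_le_mul_of_nonneg_right _ hnn; exact_mod_cast hcard
    _ = _ := rfl

lemma lap_supp_step (B : Finset V) (h : V → ℂ) (hsupp : ∀ x ∉ B, h x = 0) :
    ∀ x ∉ B ∪ B.biUnion (fun b => G.neighborFinset b), graphLap G h x = 0 := by
  intro x hx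
  rw [Finset.mem_union, not_or] at hx
  obtain ⟨hxB, hxN⟩ := hx
  have : ∀ y ∈ G.neighborFinset x, h y - h x = 0 := by
    intro y hy
    have hyB : y ∉ B := by
      intro hyB
      exact hxN (Finset.mem_biUnion.2 ⟨y, hyB, by
        rwa [SimpleGraph.mem_neighborFinset, G.adj_comm, ← SimpleGraph.mem_neighborFinset]⟩)
    rw [hsupp y hyB, hsupp x hxB, sub_zero]
  exact Finset.sum_eq_zero this

lemma exists_ball (n : ℕ) : ∃ B : Finset V, Ω ⊆ B ∧
    ∀ g : V → ℂ, (∀ x ∉ Ω, g x = 0) → ∀ j ≤ n, ∀ x ∉ B, (graphLap G)^[j] g x = 0 := by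
  induction n with
  | zero =>
    refine ⟨Ω, subset_rfl, fun g hg j hj x hx => ?_⟩
    interval_cases j
    simpa using hg x hx
  | succ n ih =>
    obtain ⟨B, hΩB, hB⟩ := ih
    refine ⟨B ∪ B.biUnion (fun b => G.neighborFinset b), hΩB.trans Finset.subset_union_left,
      fun g hg j hj x hx => ?_⟩
    have hxB : x ∉ B := fun h => hx (Finset.mem_union_left _ h)
    rcases Nat.lt_or_ge j (n + 1) with hj' | hj'
    · exact hB g hg j (Nat.lt_succ_iff.1 hj') x hxB
    · have hj2 : j = n + 1 := le_antisymm hj hj'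
      subst hj2
      rw [Function.iterate_succ_apply']
      exact lap_supp_step G B ((graphLap G)^[n] g) (hB g hg n le_rfl) x hx

lemma ip_iter (S : Finset V) (n : ℕ) (u v : V → ℂ)
    (hu : ∀ j ≤ n, ∀ x ∉ S, (graphLap G)^[j] u x = 0)
    (hv : ∀ j ≤ n, ∀ x ∉ S, (graphLap G)^[j] v x = 0) :
    ∑ x ∈ S, (graphLap G)^[n] u x * (starRingEnd ℂ) (v x)
      = ∑ x ∈ S, u x * (starRingEnd ℂ) ((graphLap G)^[n] v x) := by
  induction n generalizing v with
  | zero => simp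
  | succ n ih =>
    have e1 : ∑ x ∈ S, (graphLap G)^[n+1] u x * (starRingEnd ℂ) (v x)
        = ∑ x ∈ S, (graphLap G)^[n] u x * (starRingEnd ℂ) (graphLap G v x) := by
      simp only [Function.iterate_succ_apply']
      exact lap_selfadj G S ((graphLap G)^[n] u) v
        (hu n (Nat.le_succ n)) (hv 0 (Nat.zero_le _))
    rw [e1, ih (graphLap G v) (fun j (hj : j ≤ n) => hu j (le_trans hj (Nat.le_succ n)))
      (fun j (hj : j ≤ n) x hx => by
        rw [← Function.iterate_succ_apply]
        exact hv (j+1) (Nat.succ_le_succ hj) x hx)]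
    simp only [Function.iterate_succ_apply]

lemma exists_bound (n : ℕ) : ∃ (B : Finset V) (K : ℝ), 0 ≤ K ∧
    ∀ g : V → ℂ, (∀ x ∉ Ω, g x = 0) → (∀ x, ‖g x‖ ≤ 1) →
      (∀ x ∉ B, (graphLap G)^[n] g x = 0) ∧ (∀ x, ‖(graphLap G)^[n] g x‖ ≤ K) := by
  induction n with
  | zero =>
    exact ⟨Ω, 1, zero_le_one, fun g hg h1 => ⟨fun x hx => by simpa using hg x hx,
      fun x => by simpa using h1 x⟩⟩
  | succ n ih =>
    obtain ⟨B, K, hK, hB⟩ := ih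
    set D : ℕ := B.sup (fun x => (G.neighborFinset x).card) with hD
    refine ⟨B ∪ B.biUnion (fun b => G.neighborFinset b), (B.card : ℝ) * K + (D : ℝ) * K,
      by positivity, fun g hg h1 => ?_⟩
    obtain ⟨hsupp, hbd⟩ := hB g hg h1
    constructor
    · intro x hx
      rw [Function.iterate_succ_apply']
      exact lap_supp_step G B ((graphLap G)^[n] g) hsupp x hx
    · intro x
      rw [Function.iterate_succ_apply']
      set h := (graphLap G)^[n] g with hh
      have expand : graphLap G h x
          = (∑ y ∈ G.neighborFinset x, h y) - ((G.neighborFinset x).card : ℂ) * h x := by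
        simp [graphLap, Finset.sum_sub_distrib]
      rw [expand]
      have t1 : ‖∑ y ∈ G.neighborFinset x, h y‖ ≤ (B.card : ℝ) * K := by
        have e2 : ∑ y ∈ G.neighborFinset x, h y = ∑ y ∈ G.neighborFinset x ∩ B, h y :=
          (Finset.sum_subset Finset.inter_subset_left (fun y hy hy' => hsupp y
            (fun hyB => hy' (Finset.mem_inter.2 ⟨hy, hyB⟩)))).symm
        rw [e2]
        calc ‖∑ y ∈ G.neighborFinset x ∩ B, h y‖
            ≤ ∑ y ∈ G.neighborFinset x ∩ B, ‖h y‖ := by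
              exact norm_sum_le _ _
          _ ≤ ∑ y ∈ G.neighborFinset x ∩ B, K := Finset.sum_le_sum fun y _ => hbd y
          _ = ((G.neighborFinset x ∩ B).card : ℝ) * K := by rw [Finset.sum_const, nsmul_eq_mul]
          _ ≤ (B.card : ℝ) * K := by
              apply mul_le_mul_of_nonneg_right _ hK
              exact_mod_cast Finset.card_le_card Finset.inter_subset_right
      have t2 : ‖((G.neighborFinset x).card : ℂ) * h x‖ ≤ (D : ℝ) * K := by
        rw [norm_mul, Complex.norm_natCast]
        by_cases hxB : x ∈ B
        · have : (G.neighborFinset x).card ≤ D :=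
            Finset.le_sup (f := fun x => (G.neighborFinset x).card) hxB
          calc ((G.neighborFinset x).card : ℝ) * ‖h x‖
              ≤ ((G.neighborFinset x).card : ℝ) * K :=
                mul_le_mul_of_nonneg_left (hbd x) (by positivity)
            _ ≤ (D : ℝ) * K := by
                apply mul_le_mul_of_nonneg_right _ hK; exact_mod_cast this
        · rw [hsupp x hxB, norm_zero, mul_zero]; positivity
      calc ‖_‖ ≤ ‖∑ y ∈ G.neighborFinset x, h y‖
            + ‖((G.neighborFinset x).card : ℂ) * h x‖ := by
            simpa using norm_sub_le (∑ y ∈ G.neighborFinset x, h y)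
              (((G.neighborFinset x).card : ℂ) * h x)
        _ ≤ (B.card : ℝ) * K + (D : ℝ) * K := add_le_add t1 t2

end Aux

section Energy
variable [DecidableEq V] (G : SimpleGraph V) [DecidableRel G.Adj] [G.LocallyFinite]
  (Ω : Finset V)

lemma extZero_supp (f : V → ℂ) : ∀ x ∉ Ω, extZero Ω f x = 0 := fun x hx => by
  simp [extZero, if_neg hx]

lemma energy_rewrite (n : ℕ) (f : V → ℂ) (S : Finset V) (hΩS : Ω ⊆ S) :
    dirichletEnergy G Ω n f = ((-1:ℂ)^n *
      ∑ x ∈ S, (graphLap G)^[n] (extZero Ω f) x * (starRingEnd ℂ) (extZero Ω f x)).re := by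
  unfold dirichletEnergy innerOmega dirichletPolyLap
  congr 1
  have e0 : ∑ x ∈ Ω, ((-1:ℂ)^n * (graphLap G)^[n] (extZero Ω f) x) * (starRingEnd ℂ) (f x)
      = (-1:ℂ)^n * ∑ x ∈ Ω, (graphLap G)^[n] (extZero Ω f) x * (starRingEnd ℂ) (f x) := by
    rw [Finset.mul_sum]; exact Finset.sum_congr rfl fun x _ => by ring
  rw [e0]
  congr 1
  have e1 : ∑ x ∈ Ω, (graphLap G)^[n] (extZero Ω f) x * (starRingEnd ℂ) (f x)
      = ∑ x ∈ Ω, (graphLap G)^[n] (extZero Ω f) x * (starRingEnd ℂ) (extZero Ω f x) :=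
    Finset.sum_congr rfl fun x hx => by rw [extZero, if_pos hx]
  rw [e1]
  exact Finset.sum_subset hΩS fun x _ hxΩ => by
    rw [extZero_supp Ω f x hxΩ, map_zero, mul_zero]

lemma energy_two (l : ℕ) (f : V → ℂ) (S : Finset V) (hΩS : Ω ⊆ S)
    (hsup : ∀ j ≤ 2*l, ∀ x ∉ S, (graphLap G)^[j] (extZero Ω f) x = 0) :
    dirichletEnergy G Ω (2*l) f
      = ∑ x ∈ S, Complex.normSq ((graphLap G)^[l] (extZero Ω f) x) := by
  rw [energy_rewrite G Ω (2*l) f S hΩS]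
  have h1 : (-1:ℂ)^(2*l) = 1 := by rw [pow_mul]; simp
  rw [h1, one_mul]
  have h2 : ∑ x ∈ S, (graphLap G)^[2*l] (extZero Ω f) x * (starRingEnd ℂ) (extZero Ω f x)
      = ∑ x ∈ S, (graphLap G)^[l] (extZero Ω f) x
          * (starRingEnd ℂ) ((graphLap G)^[l] (extZero Ω f) x) := by
    have e1 : ∀ x : V, (graphLap G)^[2*l] (extZero Ω f) x
        = (graphLap G)^[l] ((graphLap G)^[l] (extZero Ω f)) x := by
      intro x; rw [two_mul, Function.iterate_add_apply]
    rw [Finset.sum_congr rfl fun x _ => by rw [e1 x]]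
    exact ip_iter G S l ((graphLap G)^[l] (extZero Ω f)) (extZero Ω f)
      (fun j (hj : j ≤ l) x hx => by
        rw [← Function.iterate_add_apply]
        exact hsup (j + l) (by omega) x hx)
      (fun j (hj : j ≤ l) x hx => hsup j (by omega) x hx)
  rw [h2]
  have h3 : ∀ x : V, (graphLap G)^[l] (extZero Ω f) x
      * (starRingEnd ℂ) ((graphLap G)^[l] (extZero Ω f) x)
      = (Complex.normSq ((graphLap G)^[l] (extZero Ω f) x) : ℂ) := fun x =>
    Complex.mul_conj _
  rw [Finset.sum_congr rfl fun x _ => h3 x, Complex.re_sum]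
  simp

lemma energy_nonneg (n : ℕ) (f : V → ℂ) : 0 ≤ dirichletEnergy G Ω n f := by
  obtain ⟨S, hΩS, hS⟩ := exists_ball G Ω n
  have hsup := hS (extZero Ω f) (extZero_supp Ω f)
  rw [energy_rewrite G Ω n f S hΩS]
  rcases Nat.even_or_odd n with he | ho
  · have h1 : (-1:ℂ)^n = 1 := he.neg_one_pow
    obtain ⟨m, hm⟩ := he
    rw [h1, one_mul]
    have h2 : ∑ x ∈ S, (graphLap G)^[n] (extZero Ω f) x * (starRingEnd ℂ) (extZero Ω f x)
        = ∑ x ∈ S, (graphLap G)^[m] (extZero Ω f) x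
            * (starRingEnd ℂ) ((graphLap G)^[m] (extZero Ω f) x) := by
      have e1 : ∀ x : V, (graphLap G)^[n] (extZero Ω f) x
          = (graphLap G)^[m] ((graphLap G)^[m] (extZero Ω f)) x := by
        intro x; rw [hm, Function.iterate_add_apply]
      rw [Finset.sum_congr rfl fun x _ => by rw [e1 x]]
      exact ip_iter G S m ((graphLap G)^[m] (extZero Ω f)) (extZero Ω f)
        (fun j (hj : j ≤ m) x hx => by
          rw [← Function.iterate_add_apply]
          exact hsup (j + m) (by omega) x hx)
        (fun j (hj : j ≤ m) x hx => hsup j (by omega) x hx)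
    rw [h2, Finset.sum_congr rfl fun x _ => Complex.mul_conj _, Complex.re_sum]
    simp only [Complex.ofReal_re]
    exact Finset.sum_nonneg fun x _ => Complex.normSq_nonneg _
  · have h1 : (-1:ℂ)^n = -1 := ho.neg_one_pow
    obtain ⟨m, hm⟩ := ho
    rw [h1, neg_one_mul, Complex.neg_re, neg_nonneg]
    have h2 : ∑ x ∈ S, (graphLap G)^[n] (extZero Ω f) x * (starRingEnd ℂ) (extZero Ω f x)
        = ∑ x ∈ S, graphLap G ((graphLap G)^[m] (extZero Ω f)) x
            * (starRingEnd ℂ) ((graphLap G)^[m] (extZero Ω f) x) := by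
      have e1 : ∀ x : V, (graphLap G)^[n] (extZero Ω f) x
          = (graphLap G)^[m] ((graphLap G)^[m+1] (extZero Ω f)) x := by
        intro x
        have hmn : n = m + (m+1) := by omega
        rw [hmn, Function.iterate_add_apply]
      rw [Finset.sum_congr rfl fun x _ => by rw [e1 x]]
      rw [ip_iter G S m ((graphLap G)^[m+1] (extZero Ω f)) (extZero Ω f)
        (fun j (hj : j ≤ m) x hx => by
          rw [← Function.iterate_add_apply]
          exact hsup (j + (m+1)) (by omega) x hx)
        (fun j (hj : j ≤ m) x hx => hsup j (by omega) x hx)]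
      exact Finset.sum_congr rfl fun x _ => by rw [Function.iterate_succ_apply']
    rw [h2]
    exact lap_neg_re G S ((graphLap G)^[m] (extZero Ω f)) (hsup m (by omega))

lemma energy_sq (l : ℕ) (f : V → ℂ) (hf : ∑ x ∈ Ω, Complex.normSq (f x) = 1) :
    (dirichletEnergy G Ω l f)^2 ≤ dirichletEnergy G Ω (2*l) f := by
  obtain ⟨S, hΩS, hS⟩ := exists_ball G Ω (2*l)
  have hsup := hS (extZero Ω f) (extZero_supp Ω f)
  rw [energy_rewrite G Ω l f S hΩS, energy_two G Ω l f S hΩS hsup]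
  have hsum1 : ∑ x ∈ S, Complex.normSq (extZero Ω f x) = 1 := by
    rw [← Finset.sum_subset hΩS fun x _ hxΩ => by rw [extZero_supp Ω f x hxΩ, map_zero]]
    rw [← hf]
    exact Finset.sum_congr rfl fun x hx => by rw [extZero, if_pos hx]
  set z := ∑ x ∈ S, (graphLap G)^[l] (extZero Ω f) x * (starRingEnd ℂ) (extZero Ω f x) with hz
  have habs : ‖(-1:ℂ)^l * z‖ = ‖z‖ := by
    rw [norm_mul, norm_pow]; simp
  calc ((-1:ℂ)^l * z).re ^ 2 = |((-1:ℂ)^l * z).re| ^ 2 := (sq_abs _).symm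
    _ ≤ ‖(-1:ℂ)^l * z‖ ^ 2 :=
        pow_le_pow_left₀ (abs_nonneg _) (Complex.abs_re_le_norm _) 2
    _ = ‖z‖ ^ 2 := by rw [habs]
    _ ≤ (∑ x ∈ S, ‖(graphLap G)^[l] (extZero Ω f) x‖
          * ‖extZero Ω f x‖) ^ 2 := by
        have h1 : ‖z‖ ≤ ∑ x ∈ S, ‖(graphLap G)^[l] (extZero Ω f) x‖
            * ‖extZero Ω f x‖ := by
          refine (norm_sum_le _ _).trans (le_of_eq ?_)
          exact Finset.sum_congr rfl fun x _ => by rw [norm_mul, Complex.norm_conj]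
        exact pow_le_pow_left₀ (norm_nonneg z) h1 2
    _ ≤ (∑ x ∈ S, ‖(graphLap G)^[l] (extZero Ω f) x‖ ^ 2)
          * (∑ x ∈ S, ‖extZero Ω f x‖ ^ 2) :=
        Finset.sum_mul_sq_le_sq_mul_sq S _ _
    _ = (∑ x ∈ S, Complex.normSq ((graphLap G)^[l] (extZero Ω f) x))
          * (∑ x ∈ S, Complex.normSq (extZero Ω f x)) := by
        simp [Complex.sq_norm]
    _ = ∑ x ∈ S, Complex.normSq ((graphLap G)^[l] (extZero Ω f) x) := by
        rw [hsum1, mul_one]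

lemma energy_bdd (n : ℕ) : ∃ C : ℝ, ∀ f : V → ℂ,
    (∑ x ∈ Ω, Complex.normSq (f x)) = 1 → dirichletEnergy G Ω n f ≤ C := by
  obtain ⟨B, K, hK, hB⟩ := exists_bound G Ω n
  refine ⟨(Ω.card : ℝ) * K, fun f hf => ?_⟩
  have h1 : ∀ x, ‖extZero Ω f x‖ ≤ 1 := by
    intro x
    by_cases hx : x ∈ Ω
    · have hle : Complex.normSq (f x) ≤ 1 := by
        rw [← hf]
        exact Finset.single_le_sum (f := fun x => Complex.normSq (f x))
          (fun i _ => Complex.normSq_nonneg _) hx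
      have e : ‖extZero Ω f x‖ = Real.sqrt (Complex.normSq (f x)) := by
        rw [extZero, if_pos hx, Complex.norm_def]
      rw [e]
      calc Real.sqrt (Complex.normSq (f x)) ≤ Real.sqrt 1 := Real.sqrt_le_sqrt hle
        _ = 1 := Real.sqrt_one
    · rw [extZero_supp Ω f x hx]; simp
  obtain ⟨-, hbd⟩ := hB (extZero Ω f) (extZero_supp Ω f) h1
  unfold dirichletEnergy innerOmega dirichletPolyLap
  calc (∑ x ∈ Ω, ((-1:ℂ)^n * (graphLap G)^[n] (extZero Ω f) x)
          * (starRingEnd ℂ) (f x)).re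
      ≤ ‖∑ x ∈ Ω, ((-1:ℂ)^n * (graphLap G)^[n] (extZero Ω f) x)
          * (starRingEnd ℂ) (f x)‖ := Complex.re_le_norm _
    _ ≤ ∑ x ∈ Ω, ‖((-1:ℂ)^n * (graphLap G)^[n] (extZero Ω f) x)
          * (starRingEnd ℂ) (f x)‖ := norm_sum_le _ _
    _ ≤ ∑ x ∈ Ω, K := by
        refine Finset.sum_le_sum fun x hx => ?_
        rw [norm_mul, norm_mul, Complex.norm_conj, norm_pow]
        simp only [norm_neg, norm_one, one_pow, one_mul]
        have hfx : ‖f x‖ ≤ 1 := by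
          have := h1 x
          rwa [extZero, if_pos hx] at this
        calc ‖(graphLap G)^[n] (extZero Ω f) x‖ * ‖f x‖
            ≤ K * 1 := mul_le_mul (hbd x) hfx (norm_nonneg _) hK
          _ = K := mul_one K
    _ = (Ω.card : ℝ) * K := by rw [Finset.sum_const, nsmul_eq_mul]

lemma exists_normalized (k : ℕ) (hk : 1 ≤ k) (M : Submodule ℂ (V → ℂ))
    (hrank : Module.finrank ℂ M = k) (hsupp : ∀ f ∈ M, ∀ x ∉ Ω, f x = 0) :
    ∃ f ∈ M, ∑ x ∈ Ω, Complex.normSq (f x) = 1 := by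
  have hMne : M ≠ ⊥ := by
    intro h
    rw [h, finrank_bot] at hrank
    omega
  obtain ⟨f, hfM, hf0⟩ := (Submodule.ne_bot_iff M).1 hMne
  set c := ∑ x ∈ Ω, Complex.normSq (f x) with hc
  have hc0 : 0 < c := by
    rcases (Finset.sum_nonneg fun x (_ : x ∈ Ω) => Complex.normSq_nonneg (f x)).lt_or_eq
      with h | h
    · exact h
    · exfalso
      apply hf0
      funext x
      by_cases hx : x ∈ Ω
      · exact Complex.normSq_eq_zero.1
          ((Finset.sum_eq_zero_iff_of_nonneg
            (fun x _ => Complex.normSq_nonneg (f x))).1 h.symm x hx)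
      · exact hsupp f hfM x hx
  refine ⟨((Real.sqrt c : ℂ))⁻¹ • f, M.smul_mem _ hfM, ?_⟩
  have e : ∀ x, Complex.normSq ((((Real.sqrt c : ℂ))⁻¹ • f) x) = c⁻¹ * Complex.normSq (f x) := by
    intro x
    rw [Pi.smul_apply, smul_eq_mul, Complex.normSq_mul, Complex.normSq_inv,
      Complex.normSq_ofReal, Real.mul_self_sqrt hc0.le]
  rw [Finset.sum_congr rfl fun x _ => e x, ← Finset.mul_sum, ← hc, inv_mul_cancel₀ hc0.ne']

lemma exists_subspace (k : ℕ) (hk2 : k ≤ Ω.card) :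
    ∃ M : Submodule ℂ (V → ℂ), Module.finrank ℂ M = k ∧ (∀ f ∈ M, ∀ x ∉ Ω, f x = 0) := by
  obtain ⟨s, hsΩ, hscard⟩ := Finset.exists_subset_card_eq hk2
  let φ : ((↥s) → ℂ) →ₗ[ℂ] (V → ℂ) :=
    { toFun := fun u x => if h : x ∈ s then u ⟨x, h⟩ else 0
      map_add' := fun u v => by funext x; by_cases h : x ∈ s <;> simp [h]
      map_smul' := fun a u => by funext x; by_cases h : x ∈ s <;> simp [h] }
  have hinj : Function.Injective φ := by
    intro u v huv
    funext x
    have := congrFun huv (x : V)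
    simpa [φ, dif_pos x.2] using this
  refine ⟨LinearMap.range φ, ?_, ?_⟩
  · rw [LinearMap.finrank_range_of_inj hinj, Module.finrank_pi, Fintype.card_coe, hscard]
  · rintro f ⟨u, rfl⟩ x hx
    have hxs : x ∉ s := fun h => hx (hsΩ h)
    simp [φ, dif_neg hxs]

end Energy

/-- The Dirichlet `2l`-order poly-Laplace eigenvalues dominate the squares of the
Dirichlet `l`-order poly-Laplace eigenvalues: `(λ_k^l)² ≤ λ_k^{2l}`. -/
theorem stmt_8 [DecidableEq V] (G : SimpleGraph V) [DecidableRel G.Adj] [G.LocallyFinite]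
    (Ω : Finset V) (l : ℕ) (hl : 0 < l) (k : ℕ) (hk1 : 1 ≤ k) (hk2 : k ≤ Ω.card) :
    (dirichletEigenvalue G Ω l k) ^ 2 ≤ dirichletEigenvalue G Ω (2 * l) k := by
  classical
  set T : ℕ → Submodule ℂ (V → ℂ) → Set ℝ := fun n M =>
    { t | ∃ f ∈ M, (∑ x ∈ Ω, Complex.normSq (f x)) = 1 ∧ t = dirichletEnergy G Ω n f }
    with hT
  set A : ℕ → Set ℝ := fun n => { r | ∃ M : Submodule ℂ (V → ℂ), Module.finrank ℂ M = k ∧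
    (∀ f ∈ M, ∀ x ∉ Ω, f x = 0) ∧ r = sSup (T n M) } with hA
  have hEig : ∀ n, dirichletEigenvalue G Ω n k = sInf (A n) := fun n => rfl
  -- a uniform upper bound for each T n M
  have hTbdd : ∀ n, ∃ C : ℝ, ∀ M : Submodule ℂ (V → ℂ), BddAbove (T n M) := by
    intro n
    obtain ⟨C, hC⟩ := energy_bdd G Ω n
    exact ⟨C, fun M => ⟨C, by rintro t ⟨f, hfM, hf1, rfl⟩; exact hC f hf1⟩⟩
  have hTne : ∀ n (M : Submodule ℂ (V → ℂ)), Module.finrank ℂ M = k →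
      (∀ f ∈ M, ∀ x ∉ Ω, f x = 0) → (T n M).Nonempty := by
    intro n M hMr hMs
    obtain ⟨f, hfM, hf1⟩ := exists_normalized Ω k hk1 M hMr hMs
    exact ⟨dirichletEnergy G Ω n f, f, hfM, hf1, rfl⟩
  have hTpos : ∀ n (M : Submodule ℂ (V → ℂ)), ∀ t ∈ T n M, 0 ≤ t := by
    rintro n M t ⟨f, hfM, hf1, rfl⟩
    exact energy_nonneg G Ω n f
  have hsSupnn : ∀ n (M : Submodule ℂ (V → ℂ)), Module.finrank ℂ M = k →
      (∀ f ∈ M, ∀ x ∉ Ω, f x = 0) → BddAbove (T n M) → 0 ≤ sSup (T n M) := by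
    intro n M hMr hMs hbdd
    obtain ⟨t, ht⟩ := hTne n M hMr hMs
    exact (hTpos n M t ht).trans (le_csSup hbdd ht)
  have hA_lb : ∀ n, ∀ r ∈ A n, 0 ≤ r := by
    rintro n r ⟨M, hMr, hMs, rfl⟩
    obtain ⟨C, hC⟩ := hTbdd n
    exact hsSupnn n M hMr hMs (hC M)
  have hAne : ∀ n, (A n).Nonempty := by
    intro n
    obtain ⟨M, hMr, hMs⟩ := exists_subspace Ω k hk2
    exact ⟨sSup (T n M), M, hMr, hMs, rfl⟩
  have hAbdd : ∀ n, BddBelow (A n) := fun n => ⟨0, hA_lb n⟩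
  have hlamnn : 0 ≤ sInf (A l) := le_csInf (hAne l) (hA_lb l)
  rw [hEig l, hEig (2*l)]
  refine le_csInf (hAne (2*l)) ?_
  rintro r ⟨M, hMr, hMs, rfl⟩
  obtain ⟨C2, hC2⟩ := hTbdd (2*l)
  have hbdd2 : BddAbove (T (2*l) M) := hC2 M
  have hr0 : 0 ≤ sSup (T (2*l) M) := hsSupnn (2*l) M hMr hMs hbdd2
  have h1 : sInf (A l) ≤ sSup (T l M) := csInf_le (hAbdd l) ⟨M, hMr, hMs, rfl⟩
  have h2 : sSup (T l M) ≤ Real.sqrt (sSup (T (2*l) M)) := by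
    refine Real.sSup_le ?_ (Real.sqrt_nonneg _)
    rintro t ⟨f, hfM, hf1, rfl⟩
    have hsq : (dirichletEnergy G Ω l f) ^ 2 ≤ dirichletEnergy G Ω (2*l) f :=
      energy_sq G Ω l f hf1
    have hmem2 : dirichletEnergy G Ω (2*l) f ∈ T (2*l) M := ⟨f, hfM, hf1, rfl⟩
    have hle : (dirichletEnergy G Ω l f) ^ 2 ≤ sSup (T (2*l) M) :=
      hsq.trans (le_csSup hbdd2 hmem2)
    calc dirichletEnergy G Ω l f
        = Real.sqrt ((dirichletEnergy G Ω l f) ^ 2) :=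
          (Real.sqrt_sq (energy_nonneg G Ω l f)).symm
      _ ≤ Real.sqrt (sSup (T (2*l) M)) := Real.sqrt_le_sqrt hle
  calc sInf (A l) ^ 2 ≤ Real.sqrt (sSup (T (2*l) M)) ^ 2 :=
        pow_le_pow_left₀ hlamnn (h1.trans h2) 2
    _ = sSup (T (2*l) M) := Real.sq_sqrt hr0
end

section
/- Let d, l be positive integers, M, K > 0, and let F : [-π,π]^d → ℝ be measurable with 0 ≤ F ≤ M and ∫_{[-π,π]^d} F(z) dz ≥ K. Assume R := (K/(M·V_d))^{1/d} ≤ √6, where V_d is the volume of the unit ball in ℝ^d. Then ∫_{[-π,π]^d} Φ(z)^l F(z) dz ≥ Σ_{m=0}^l C(l,m) (-1/12)^m · (dK/(d+2(l+m))) · (K/(M V_d))^{2(l+m)/d}, and this lower bound is positive. Here Φ(z) = Σᵢ₌₁^d (2 - 2cos z_i). -/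
open Finset MeasureTheory Real

/-- The Fourier symbol `Φ(z) = ∑ᵢ (2 - 2 cos zᵢ)` of `-Δ` on `ℤ^d`. -/
noncomputable def PhiZ {d : ℕ} (z : Fin d → ℝ) : ℝ :=
  ∑ i : Fin d, (2 - 2 * Real.cos (z i))

/-- The cube `[-π, π]^d`. -/
def piCube (d : ℕ) : Set (Fin d → ℝ) := Set.univ.pi fun _ => Set.Icc (-π) π

/-- The volume `V_d` of the unit ball in `ℝ^d`. -/
noncomputable def unitBallVol (d : ℕ) : ℝ :=
  (volume (Metric.ball (0 : EuclideanSpace ℝ (Fin d)) 1)).toReal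


lemma sin_lb {x : ℝ} (hx : 0 ≤ x) : x - x ^ 3 / 6 ≤ Real.sin x := by
  have hder : ∀ y : ℝ, HasDerivAt (fun t : ℝ => Real.sin t - (t - t ^ 3 / 6))
      (Real.cos y - (1 - 3 * y ^ 2 / 6)) y := by
    intro y
    have h1 : HasDerivAt (fun t : ℝ => t - t ^ 3 / 6) (1 - 3 * y ^ 2 / 6) y := by
      simpa using (hasDerivAt_id' y).fun_sub ((hasDerivAt_pow 3 y).div_const 6)
    exact (Real.hasDerivAt_sin y).sub h1
  have key : MonotoneOn (fun t : ℝ => Real.sin t - (t - t ^ 3 / 6)) (Set.Ici 0) := by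
    apply monotoneOn_of_deriv_nonneg (convex_Ici 0)
    · exact (Real.continuous_sin.sub (by continuity)).continuousOn
    · intro y _; exact (hder y).differentiableAt.differentiableWithinAt
    · intro y _
      rw [(hder y).deriv]
      have h := Real.one_sub_sq_div_two_le_cos (x := y)
      nlinarith
  have h0 := key Set.self_mem_Ici (Set.mem_Ici.2 hx) hx
  simp only [Real.sin_zero] at h0
  nlinarith

lemma cos_ub_aux {x : ℝ} (hx : 0 ≤ x) : Real.cos x ≤ 1 - x ^ 2 / 2 + x ^ 4 / 24 := by
  have hder : ∀ y : ℝ, HasDerivAt (fun t : ℝ => 1 - t ^ 2 / 2 + t ^ 4 / 24 - Real.cos t)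
      (0 - 2 * y ^ 1 / 2 + 4 * y ^ 3 / 24 - -Real.sin y) y := by
    intro y
    exact (((hasDerivAt_const y (1:ℝ)).sub ((hasDerivAt_pow 2 y).div_const 2)).add
      ((hasDerivAt_pow 4 y).div_const 24)).sub (Real.hasDerivAt_cos y)
  have key : MonotoneOn (fun t : ℝ => 1 - t ^ 2 / 2 + t ^ 4 / 24 - Real.cos t) (Set.Ici 0) := by
    apply monotoneOn_of_deriv_nonneg (convex_Ici 0)
    · exact (by continuity : Continuous fun t : ℝ => 1 - t ^ 2 / 2 + t ^ 4 / 24 - Real.cos t).continuousOn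
    · intro y _; exact (hder y).differentiableAt.differentiableWithinAt
    · intro y hy
      rw [(hder y).deriv]
      have h := sin_lb (Set.mem_Ici.1 (interior_subset hy))
      nlinarith
  have h0 := key Set.self_mem_Ici (Set.mem_Ici.2 hx) hx
  simp only [Real.cos_zero] at h0
  nlinarith

lemma two_sub_cos_lb (t : ℝ) : t ^ 2 - t ^ 4 / 12 ≤ 2 - 2 * Real.cos t := by
  have h : Real.cos t ≤ 1 - t ^ 2 / 2 + t ^ 4 / 24 := by
    rcases le_or_gt 0 t with h | h
    · exact cos_ub_aux h
    · have h2 := cos_ub_aux (by linarith : (0:ℝ) ≤ -t)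
      have e2 : (-t) ^ 2 = t ^ 2 := by ring
      have e4 : (-t) ^ 4 = t ^ 4 := by ring
      rw [Real.cos_neg, e2, e4] at h2
      exact h2
  linarith

lemma sum_pow4_le {d : ℕ} (z : Fin d → ℝ) : ∑ i, z i ^ 4 ≤ (∑ i, z i ^ 2) ^ 2 := by
  have h : ∀ i ∈ Finset.univ, z i ^ 4 ≤ z i ^ 2 * ∑ j, z j ^ 2 := by
    intro i _
    have h1 : z i ^ 2 ≤ ∑ j, z j ^ 2 :=
      Finset.single_le_sum (fun j _ => sq_nonneg (z j)) (Finset.mem_univ i)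
    calc z i ^ 4 = z i ^ 2 * z i ^ 2 := by ring
    _ ≤ z i ^ 2 * ∑ j, z j ^ 2 := mul_le_mul_of_nonneg_left h1 (sq_nonneg _)
  calc ∑ i, z i ^ 4 ≤ ∑ i, z i ^ 2 * ∑ j, z j ^ 2 := Finset.sum_le_sum h
  _ = (∑ i, z i ^ 2) ^ 2 := by rw [← Finset.sum_mul]; ring

lemma phiZ_nonneg {d : ℕ} (z : Fin d → ℝ) : 0 ≤ PhiZ z :=
  Finset.sum_nonneg fun i _ => by nlinarith [Real.cos_le_one (z i)]

lemma phi_lb {d : ℕ} (z : Fin d → ℝ) (hz : ∀ i, |z i| ≤ π) :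
    min (∑ i, z i ^ 2) 6 - (min (∑ i, z i ^ 2) 6) ^ 2 / 12 ≤ PhiZ z := by
  set S := ∑ i, z i ^ 2 with hS
  have hbase : S - S ^ 2 / 12 ≤ PhiZ z := by
    have h1 : ∑ i, (z i ^ 2 - z i ^ 4 / 12) ≤ PhiZ z :=
      Finset.sum_le_sum fun i _ => two_sub_cos_lb (z i)
    have h2 : ∑ i, (z i ^ 2 - z i ^ 4 / 12) = S - (∑ i, z i ^ 4) / 12 := by
      rw [Finset.sum_sub_distrib, ← Finset.sum_div]
    have h3 := sum_pow4_le z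
    rw [h2] at h1
    linarith
  rcases le_or_gt S 6 with hS6 | hS6
  · rw [min_eq_left hS6]; exact hbase
  · rw [min_eq_right hS6.le]
    norm_num
    -- goal should be 3 ≤ PhiZ z  (6 - 36/12 = 3)
    by_cases hbig : ∃ i, 2 * π / 3 ≤ |z i|
    · obtain ⟨i, hi⟩ := hbig
      have hterm : 3 ≤ 2 - 2 * Real.cos (z i) := by
        have hc : Real.cos (|z i|) ≤ Real.cos (2 * π / 3) :=
          Real.cos_le_cos_of_nonneg_of_le_pi (by positivity) (hz i) hi
        have hval : Real.cos (2 * π / 3) = -(1 / 2) := by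
          have : 2 * π / 3 = π - π / 3 := by ring
          rw [this, Real.cos_pi_sub, Real.cos_pi_div_three]
        rw [hval, Real.cos_abs] at hc
        linarith
      have hsum : 2 - 2 * Real.cos (z i) ≤ PhiZ z :=
        Finset.single_le_sum (f := fun j => 2 - 2 * Real.cos (z j))
          (fun j _ => by show (0:ℝ) ≤ 2 - 2 * Real.cos (z j); nlinarith [Real.cos_le_one (z j)]) (Finset.mem_univ i)
      linarith
    · push_neg at hbig
      have hπ : π < 3.15 := Real.pi_lt_d2
      have hπ0 : 0 < π := Real.pi_pos
      have h1 : ∑ i, (z i ^ 2 - z i ^ 4 / 12) ≤ PhiZ z :=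
        Finset.sum_le_sum fun i _ => two_sub_cos_lb (z i)
      have h2 : ∀ i ∈ Finset.univ, z i ^ 2 * (1 - π ^ 2 / 27) ≤ z i ^ 2 - z i ^ 4 / 12 := by
        intro i _
        have hlt : |z i| < 2 * π / 3 := hbig i
        have hsq : z i ^ 2 ≤ (2 * π / 3) ^ 2 := by
          rw [← sq_abs]
          exact pow_le_pow_left₀ (abs_nonneg _) hlt.le 2
        nlinarith [sq_nonneg (z i)]
      have h3 : S * (1 - π ^ 2 / 27) ≤ ∑ i, (z i ^ 2 - z i ^ 4 / 12) := by
        calc S * (1 - π ^ 2 / 27) = ∑ i, z i ^ 2 * (1 - π ^ 2 / 27) := by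
              rw [← Finset.sum_mul]
        _ ≤ _ := Finset.sum_le_sum h2
      have hfac : (1:ℝ) / 2 ≤ 1 - π ^ 2 / 27 := by nlinarith
      have h4 : 3 ≤ S * (1 - π ^ 2 / 27) := by
        calc (3:ℝ) = 6 * (1 / 2) := by norm_num
        _ ≤ S * (1 - π ^ 2 / 27) := mul_le_mul hS6.le hfac (by norm_num) (by linarith)
      linarith

lemma ball_integral (d n : ℕ) (hd : 0 < d) {R : ℝ} (hR : 0 < R) :
    ∫ x in Metric.closedBall (0 : EuclideanSpace ℝ (Fin d)) R, ‖x‖ ^ (2 * n) =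
      d * unitBallVol d * R ^ (d + 2 * n) / (d + 2 * n) := by
  haveI : Nontrivial (EuclideanSpace ℝ (Fin d)) :=
    Module.nontrivial_of_finrank_pos (R := ℝ) (by rw [finrank_euclideanSpace_fin]; exact hd)
  set f : ℝ → ℝ := Set.indicator (Set.Iic R) (fun y => y ^ (2 * n)) with hf
  have h1 : (∫ x in Metric.closedBall (0 : EuclideanSpace ℝ (Fin d)) R, ‖x‖ ^ (2 * n)) =
      ∫ x : EuclideanSpace ℝ (Fin d), f ‖x‖ := by
    rw [← integral_indicator measurableSet_closedBall]
    congr 1; funext x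
    by_cases h : ‖x‖ ≤ R <;>
      simp [hf, Set.indicator, Metric.mem_closedBall, dist_zero_right, h]
  have h2 := integral_fun_norm_addHaar (volume : Measure (EuclideanSpace ℝ (Fin d))) f
  rw [finrank_euclideanSpace_fin] at h2
  have h3 : (∫ y in Set.Ioi (0:ℝ), y ^ (d - 1) • f y) = R ^ (d + 2 * n) / (d + 2 * n) := by
    have he : ∀ y : ℝ, y ^ (d - 1) • f y =
        Set.indicator (Set.Iic R) (fun y => y ^ (d - 1 + 2 * n)) y := by
      intro y
      by_cases h : y ∈ Set.Iic R <;> simp [hf, h, smul_eq_mul, pow_add]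
    simp only [he]
    rw [integral_indicator measurableSet_Iic, Measure.restrict_restrict measurableSet_Iic,
      Set.Iic_inter_Ioi, ← intervalIntegral.integral_of_le hR.le,
      integral_pow]
    have hk : d - 1 + 2 * n + 1 = d + 2 * n := by omega
    rw [hk]
    have hc : ((d - 1 + 2 * n : ℕ) : ℝ) + 1 = ((d : ℝ) + 2 * n) := by
      push_cast [Nat.cast_sub hd]
      ring
    rw [hc, zero_pow (by omega : d + 2 * n ≠ 0), sub_zero]
  rw [h1, h2, h3, nsmul_eq_mul, smul_eq_mul]
  unfold unitBallVol
  rw [measureReal_def]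
  ring

set_option maxHeartbeats 1000000 in
/-- Li–Yau type rearrangement lemma for the symbol `Φ` on `[-π,π]^d`. -/
theorem stmt_15 (d l : ℕ) (hd : 0 < d) (hl : 0 < l) (M K : ℝ) (hM : 0 < M) (hK : 0 < K)
    (F : (Fin d → ℝ) → ℝ) (hmeas : Measurable F)
    (hF0 : ∀ z, 0 ≤ F z) (hFM : ∀ z, F z ≤ M)
    (hint : K ≤ ∫ z in piCube d, F z)
    (hR : (K / (M * unitBallVol d)) ^ ((1 : ℝ) / d) ≤ Real.sqrt 6) :
    (∑ m ∈ Finset.range (l + 1), (l.choose m : ℝ) * (-1 / 12) ^ m *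
        (d * K / (d + 2 * (l + m))) *
        (K / (M * unitBallVol d)) ^ ((2 * (l + m) : ℝ) / d)
      ≤ ∫ z in piCube d, PhiZ z ^ l * F z) ∧
    0 < ∑ m ∈ Finset.range (l + 1), (l.choose m : ℝ) * (-1 / 12) ^ m *
        (d * K / (d + 2 * (l + m))) *
        (K / (M * unitBallVol d)) ^ ((2 * (l + m) : ℝ) / d) := by
  haveI : Nonempty (Fin d) := ⟨⟨0, hd⟩⟩
  set V : ℝ := unitBallVol d with hVdef
  have hV : 0 < V := by
    rw [hVdef]
    exact ENNReal.toReal_pos (Metric.measure_ball_pos volume 0 one_pos).ne' measure_ball_lt_top.ne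
  have ha : 0 < K / (M * V) := div_pos hK (mul_pos hM hV)
  set R : ℝ := (K / (M * V)) ^ ((1 : ℝ) / d) with hRdef
  have hRpos : 0 < R := Real.rpow_pos_of_pos ha _
  have hdR : (1 : ℝ) / d * d = 1 := by
    field_simp
  have hRd : R ^ d = K / (M * V) := by
    rw [hRdef, ← Real.rpow_natCast ((K / (M * V)) ^ ((1 : ℝ) / d)) d, ← Real.rpow_mul ha.le,
      hdR, Real.rpow_one]
  have hR2 : R ^ 2 ≤ 6 := by
    calc R ^ 2 ≤ Real.sqrt 6 ^ 2 := pow_le_pow_left₀ hRpos.le hR 2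
    _ = 6 := Real.sq_sqrt (by norm_num)
  -- basic objects
  set q : (Fin d → ℝ) → ℝ := fun z => ∑ i, z i ^ 2 with hqdef
  set w : ℝ → ℝ := fun S => min S 6 - min S 6 ^ 2 / 12 with hwdef
  set Ψ : (Fin d → ℝ) → ℝ := fun z => w (q z) ^ l with hΨdef
  have hq0 : ∀ z, 0 ≤ q z := fun z => Finset.sum_nonneg fun i _ => sq_nonneg _
  have hqcont : Continuous q := continuous_finset_sum _ fun i _ => (continuous_apply i).pow 2
  have hwcont : Continuous w := by
    apply Continuous.sub (continuous_id.min continuous_const)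
    exact ((continuous_id.min continuous_const).pow 2).div_const 12
  have hΨcont : Continuous Ψ := (hwcont.comp hqcont).pow l
  have hw3 : ∀ S, w S ≤ 3 := by
    intro S
    have h := min_le_right S 6
    simp only [hwdef]
    nlinarith [sq_nonneg (min S 6 - 6)]
  have hw0 : ∀ S, 0 ≤ S → 0 ≤ w S := by
    intro S hS
    have h1 : 0 ≤ min S 6 := le_min hS (by norm_num)
    have h2 : min S 6 ≤ 6 := min_le_right _ _
    simp only [hwdef]
    nlinarith
  have hwmono : Monotone w := by
    intro a b hab
    have h1 : min a 6 ≤ min b 6 := min_le_min hab le_rfl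
    have h2 : min b 6 ≤ 6 := min_le_right _ _
    have h3 : min a 6 ≤ 6 := min_le_right _ _
    simp only [hwdef]
    nlinarith
  have hΨ0 : ∀ z, 0 ≤ Ψ z := fun z => pow_nonneg (hw0 _ (hq0 z)) l
  have hΨ3 : ∀ z, Ψ z ≤ 3 ^ l := fun z => pow_le_pow_left₀ (hw0 _ (hq0 z)) (hw3 _) l
  -- cube facts
  have hcubeMeas : MeasurableSet (piCube d) :=
    MeasurableSet.univ_pi fun _ => measurableSet_Icc
  have hcubeVol : volume (piCube d) ≠ ⊤ := by
    rw [piCube, volume_pi_pi]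
    exact (ENNReal.prod_lt_top fun i _ => by
      rw [Real.volume_Icc]; exact ENNReal.ofReal_lt_top).ne
  -- the ball
  set B : Set (Fin d → ℝ) := {z | q z ≤ R ^ 2} with hBdef
  have hBMeas : MeasurableSet B := hqcont.measurable measurableSet_Iic
  have hsq_le : ∀ z ∈ B, ∀ i, z i ^ 2 ≤ 6 := by
    intro z hz i
    have h1 : z i ^ 2 ≤ q z :=
      Finset.single_le_sum (f := fun j => z j ^ 2) (fun j _ => sq_nonneg _) (Finset.mem_univ i)
    exact h1.trans (le_trans hz hR2)
  have hBsub : B ⊆ piCube d := by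
    intro z hz
    intro i _
    have h2 : z i ^ 2 ≤ π ^ 2 := (hsq_le z hz i).trans (by nlinarith [Real.pi_gt_three])
    have h3 : |z i| ≤ π := by
      have := Real.sqrt_le_sqrt h2
      rwa [Real.sqrt_sq_eq_abs, Real.sqrt_sq Real.pi_pos.le] at this
    exact ⟨neg_le_of_abs_le h3, le_of_abs_le h3⟩
  -- transfer to Euclidean space
  set e := (MeasurableEquiv.toLp 2 (Fin d → ℝ)).symm with hedef
  have hvp := EuclideanSpace.volume_preserving_symm_measurableEquiv_toLp (Fin d)
  have hnorm : ∀ x : EuclideanSpace ℝ (Fin d), q (e x) = ‖x‖ ^ 2 := by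
    intro x
    have h1 : ‖x‖ ^ 2 = ∑ i, ‖x i‖ ^ 2 := by
      rw [EuclideanSpace.norm_eq, Real.sq_sqrt (Finset.sum_nonneg fun i _ => sq_nonneg _)]
    rw [h1]
    simp [Real.norm_eq_abs, sq_abs]
    rfl
  have hpre : e ⁻¹' B = Metric.closedBall (0 : EuclideanSpace ℝ (Fin d)) R := by
    ext x
    simp only [Set.mem_preimage, hBdef, Set.mem_setOf_eq, Metric.mem_closedBall,
      dist_zero_right, hnorm x]
    constructor
    · intro h; nlinarith [norm_nonneg x]
    · intro h; exact pow_le_pow_left₀ (norm_nonneg x) h 2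
  have hvolB : volume B = ENNReal.ofReal (R ^ d) * volume (Metric.ball (0 : EuclideanSpace ℝ (Fin d)) 1) := by
    have h1 := hvp.measure_preimage hBMeas.nullMeasurableSet
    rw [hpre] at h1
    rw [← h1, Measure.addHaar_closedBall _ _ hRpos.le, finrank_euclideanSpace_fin]
  have hvolBne : volume B ≠ ⊤ := by
    rw [hvolB]
    exact ENNReal.mul_ne_top ENNReal.ofReal_ne_top measure_ball_lt_top.ne
  have hvolBreal : (volume B).toReal = V * R ^ d := by
    rw [hvolB, ENNReal.toReal_mul, ENNReal.toReal_ofReal (pow_nonneg hRpos.le d), hVdef]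
    rw [unitBallVol]
    ring
  have hMvolB : M * (volume B).toReal = K := by
    rw [hvolBreal, hRd]
    field_simp
  -- integrability helper
  have hIntOn : ∀ (s : Set (Fin d → ℝ)), MeasurableSet s → volume s ≠ ⊤ →
      ∀ (g : (Fin d → ℝ) → ℝ), Measurable g → ∀ C : ℝ, (∀ z ∈ s, |g z| ≤ C) →
      IntegrableOn g s := by
    intro s hs hvol g hg C hC
    apply Measure.integrableOn_of_bounded hvol hg.aestronglyMeasurable (M := C)
    filter_upwards [ae_restrict_mem hs] with z hz
    rw [Real.norm_eq_abs]; exact hC z hz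
  have habsF : ∀ z, |F z| ≤ M := fun z => by rw [abs_of_nonneg (hF0 z)]; exact hFM z
  have iF : IntegrableOn F (piCube d) :=
    hIntOn _ hcubeMeas hcubeVol F hmeas M fun z _ => habsF z
  have iF_B : IntegrableOn F B := iF.mono_set hBsub
  have iΨ_B : IntegrableOn Ψ B :=
    hIntOn _ hBMeas hvolBne Ψ hΨcont.measurable (3 ^ l) fun z _ => by
      rw [abs_of_nonneg (hΨ0 z)]; exact hΨ3 z
  have iΨF : IntegrableOn (fun z => Ψ z * F z) (piCube d) :=
    hIntOn _ hcubeMeas hcubeVol _ (hΨcont.measurable.mul hmeas) (3 ^ l * M) fun z _ => by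
      rw [abs_mul]
      exact mul_le_mul (by rw [abs_of_nonneg (hΨ0 z)]; exact hΨ3 z) (habsF z) (abs_nonneg _)
        (by positivity)
  have iΨF_B : IntegrableOn (fun z => Ψ z * F z) B := iΨF.mono_set hBsub
  have iΨF_diff : IntegrableOn (fun z => Ψ z * F z) (piCube d \ B) :=
    iΨF.mono_set Set.diff_subset
  have iF_diff : IntegrableOn F (piCube d \ B) := iF.mono_set Set.diff_subset
  have hPhiCont : Continuous (PhiZ (d := d)) := by
    unfold PhiZ
    exact continuous_finset_sum _ fun i _ =>
      (continuous_const.sub (continuous_const.mul (Real.continuous_cos.comp (continuous_apply i))))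
  have iPhiF : IntegrableOn (fun z => PhiZ z ^ l * F z) (piCube d) := by
    apply hIntOn _ hcubeMeas hcubeVol _ ((hPhiCont.pow l).measurable.mul hmeas)
      ((4 * d) ^ l * M)
    intro z _
    show |PhiZ z ^ l * F z| ≤ _
    rw [abs_mul]
    have hb : PhiZ z ≤ 4 * d := by
      unfold PhiZ
      calc ∑ i : Fin d, (2 - 2 * Real.cos (z i)) ≤ ∑ _i : Fin d, (4:ℝ) :=
        Finset.sum_le_sum fun i _ => by nlinarith [Real.neg_one_le_cos (z i)]
      _ = 4 * d := by rw [Finset.sum_const]; simp [mul_comm]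
    exact mul_le_mul (by
      rw [abs_of_nonneg (pow_nonneg (phiZ_nonneg z) l)]
      exact pow_le_pow_left₀ (phiZ_nonneg z) hb l) (habsF z) (abs_nonneg _) (by positivity)

  -- Step A: pointwise comparison on the cube
  have hA : (∫ z in piCube d, Ψ z * F z) ≤ ∫ z in piCube d, PhiZ z ^ l * F z := by
    apply setIntegral_mono_on iΨF iPhiF hcubeMeas
    intro z hz
    have hz' : ∀ i, |z i| ≤ π := by
      intro i
      have h := hz i (Set.mem_univ i)
      exact abs_le.2 ⟨h.1, h.2⟩
    have h1 : w (q z) ≤ PhiZ z := phi_lb z hz'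
    have h2 : Ψ z ≤ PhiZ z ^ l := pow_le_pow_left₀ (hw0 _ (hq0 z)) h1 l
    exact mul_le_mul_of_nonneg_right h2 (hF0 z)
  -- Step B: bathtub
  set c : ℝ := w (R ^ 2) ^ l with hcdef
  have hc0 : 0 ≤ c := pow_nonneg (hw0 _ (sq_nonneg R)) l
  have iΨMF_B : IntegrableOn (fun z => Ψ z * (M - F z)) B :=
    hIntOn _ hBMeas hvolBne _ (hΨcont.measurable.mul (measurable_const.sub hmeas))
      (3 ^ l * M) fun z _ => by
        rw [abs_mul]
        apply mul_le_mul (by rw [abs_of_nonneg (hΨ0 z)]; exact hΨ3 z) _ (abs_nonneg _)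
          (by positivity)
        rw [abs_of_nonneg (by linarith [hFM z])]
        linarith [hF0 z]
  have iconst_B : IntegrableOn (fun _ => M) B := integrableOn_const hvolBne
  have icMF_B : IntegrableOn (fun z => c * (M - F z)) B := (iconst_B.sub iF_B).const_mul c
  have icF_diff : IntegrableOn (fun z => c * F z) (piCube d \ B) := iF_diff.const_mul c
  have hΨleB : ∀ z ∈ B, Ψ z ≤ c := fun z hz =>
    pow_le_pow_left₀ (hw0 _ (hq0 z)) (hwmono hz) l
  have hcleD : ∀ z ∈ piCube d \ B, c ≤ Ψ z := by
    intro z hz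
    have h1 : R ^ 2 ≤ q z := le_of_not_ge hz.2
    exact pow_le_pow_left₀ (hw0 _ (sq_nonneg R)) (hwmono h1) l
  have p1 : (∫ z in B, Ψ z * (M - F z)) ≤ ∫ z in B, c * (M - F z) :=
    setIntegral_mono_on iΨMF_B icMF_B hBMeas fun z hz =>
      mul_le_mul_of_nonneg_right (hΨleB z hz) (by linarith [hFM z])
  have p2 : (∫ z in piCube d \ B, c * F z) ≤ ∫ z in piCube d \ B, Ψ z * F z :=
    setIntegral_mono_on icF_diff iΨF_diff (hcubeMeas.diff hBMeas) fun z hz =>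
      mul_le_mul_of_nonneg_right (hcleD z hz) (hF0 z)
  have hsplitΨF : (∫ z in piCube d, Ψ z * F z)
      = (∫ z in B, Ψ z * F z) + ∫ z in piCube d \ B, Ψ z * F z := by
    rw [← setIntegral_union disjoint_sdiff_self_right (hcubeMeas.diff hBMeas) iΨF_B iΨF_diff,
      Set.union_diff_cancel hBsub]
  have hsplitF : (∫ z in piCube d, F z) = (∫ z in B, F z) + ∫ z in piCube d \ B, F z := by
    rw [← setIntegral_union disjoint_sdiff_self_right (hcubeMeas.diff hBMeas) iF_B iF_diff,
      Set.union_diff_cancel hBsub]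
  have e1 : (∫ z in B, Ψ z * (M - F z)) = M * (∫ z in B, Ψ z) - ∫ z in B, Ψ z * F z := by
    have hfe : (fun z => Ψ z * (M - F z)) = fun z => M * Ψ z - Ψ z * F z := by
      funext z; ring
    rw [hfe, integral_sub (iΨ_B.const_mul M) iΨF_B, integral_const_mul]
  have e2 : (∫ z in B, c * (M - F z)) = c * (K - ∫ z in B, F z) := by
    rw [integral_const_mul, integral_sub iconst_B iF_B, setIntegral_const, smul_eq_mul,
      mul_comm (volume.real B) M, measureReal_def, hMvolB]
  have e3 : (∫ z in piCube d \ B, c * F z) = c * ∫ z in piCube d \ B, F z :=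
    integral_const_mul c _
  have p3 : c * (K - ∫ z in B, F z) ≤ c * ((∫ z in piCube d, F z) - ∫ z in B, F z) :=
    mul_le_mul_of_nonneg_left (by linarith) hc0
  have e4 : c * ((∫ z in piCube d, F z) - ∫ z in B, F z) = c * ∫ z in piCube d \ B, F z := by
    rw [hsplitF]; ring
  have hB2 : M * (∫ z in B, Ψ z) ≤ ∫ z in piCube d, Ψ z * F z := by
    have p2' := p2
    rw [e3] at p2'
    linarith
  -- Step C: computation of the model integral
  have hexp : ∀ x : ℝ, (x - x ^ 2 / 12) ^ l
      = ∑ m ∈ Finset.range (l + 1), (l.choose m : ℝ) * (-1 / 12) ^ m * x ^ (l + m) := by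
    intro x
    have hxx : x - x ^ 2 / 12 = (-1 / 12) * x ^ 2 + x := by ring
    rw [hxx, add_pow]
    apply Finset.sum_congr rfl
    intro m hm
    have hm' : m ≤ l := Nat.lt_succ_iff.1 (Finset.mem_range.1 hm)
    have h1 : ((-1 / 12) * x ^ 2) ^ m * x ^ (l - m) = (-1 / 12) ^ m * x ^ (l + m) := by
      rw [mul_pow, ← pow_mul, mul_assoc, ← pow_add]
      congr 2
      omega
    rw [h1]; ring
  have iqpow : ∀ m : ℕ, IntegrableOn (fun z => q z ^ (l + m)) B := fun m =>
    hIntOn _ hBMeas hvolBne _ ((hqcont.pow (l + m)).measurable) ((R ^ 2) ^ (l + m))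
      fun z hz => by
        rw [abs_of_nonneg (pow_nonneg (hq0 z) _)]
        exact pow_le_pow_left₀ (hq0 z) hz _
  have hqint : ∀ m : ℕ, (∫ z in B, q z ^ (l + m))
      = d * V * R ^ (d + 2 * (l + m)) / (d + 2 * ((l + m : ℕ) : ℝ)) := by
    intro m
    have h1 := hvp.setIntegral_preimage_emb e.measurableEmbedding (fun z => q z ^ (l + m)) B
    rw [hpre] at h1
    rw [← h1]
    have h2 : ∀ x : EuclideanSpace ℝ (Fin d), q (e x) ^ (l + m) = ‖x‖ ^ (2 * (l + m)) := by
      intro x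
      rw [hnorm x, ← pow_mul]
    refine (setIntegral_congr_fun measurableSet_closedBall (fun x _ => h2 x)).trans ?_
    have h3 := ball_integral d (l + m) hd hRpos
    rw [h3, ← hVdef]
  have hC : M * (∫ z in B, Ψ z)
      = ∑ m ∈ Finset.range (l + 1), (l.choose m : ℝ) * (-1 / 12) ^ m *
          (d * K / (d + 2 * (l + m))) * (K / (M * V)) ^ ((2 * ((l : ℝ) + m)) / d) := by
    have c1 : (∫ z in B, Ψ z) = ∫ z in B, ∑ m ∈ Finset.range (l + 1),
        (l.choose m : ℝ) * (-1 / 12) ^ m * q z ^ (l + m) := by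
      apply setIntegral_congr_fun hBMeas
      intro z hz
      have hmin : min (q z) 6 = q z := min_eq_left (le_trans hz hR2)
      show w (q z) ^ l = _
      simp only [hwdef]
      rw [hmin, hexp (q z)]
    rw [c1, integral_finset_sum _ fun m _ => (iqpow m).const_mul _, Finset.mul_sum]
    apply Finset.sum_congr rfl
    intro m hm
    rw [integral_const_mul, hqint m]
    have hD : ((d : ℝ) + 2 * ((l : ℝ) + m)) ≠ 0 := by positivity
    have hr2n : R ^ (2 * (l + m)) = (K / (M * V)) ^ ((2 * ((l : ℝ) + m)) / d) := by
      rw [← Real.rpow_natCast R (2 * (l + m)), hRdef, ← Real.rpow_mul ha.le]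
      congr 1
      push_cast
      ring
    rw [pow_add, hRd, hr2n]
    set X := (K / (M * V)) ^ ((2 * ((l : ℝ) + m)) / d) with hXdef
    push_cast
    have hK' : V * (K / (M * V)) * M = K := by
      field_simp
    set A : ℝ := (l.choose m : ℝ) * (-1 / 12) ^ m with hAdef
    set D : ℝ := (d : ℝ) + 2 * ((l : ℝ) + m) with hDdef
    calc M * (A * ((d : ℝ) * V * (K / (M * V) * X) / D))
        = (V * (K / (M * V)) * M) * (A * (d : ℝ) * X / D) := by ring
    _ = K * (A * (d : ℝ) * X / D) := by rw [hK']
    _ = A * ((d : ℝ) * K / D) * X := by ring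
  -- Step D: positivity
  have hposInt : 0 < ∫ z in B, Ψ z := by
    refine (setIntegral_pos_iff_support_of_nonneg_ae ?_ iΨ_B).2 ?_
    · exact Filter.Eventually.of_forall hΨ0
    · have hsub : B \ {0} ⊆ Function.support Ψ ∩ B := by
        rintro z ⟨hzB, hz0⟩
        refine ⟨?_, hzB⟩
        have hqz : 0 < q z := by
          rcases eq_or_lt_of_le (hq0 z) with h | h
          · exfalso
            apply hz0
            have hall := (Finset.sum_eq_zero_iff_of_nonneg
              (fun i (_ : i ∈ Finset.univ) => sq_nonneg (z i))).1 h.symm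
            have : z = 0 := funext fun i =>
              (pow_eq_zero_iff two_ne_zero).1 (hall i (Finset.mem_univ i))
            simp [this]
          · exact h
        have hq6 : q z ≤ 6 := le_trans hzB hR2
        have hwpos : 0 < w (q z) := by
          simp only [hwdef]
          rw [min_eq_left hq6]
          nlinarith
        exact (pow_pos hwpos l).ne'
      calc (0 : ENNReal) < volume B := by
            rw [hvolB]
            exact ENNReal.mul_pos (ENNReal.ofReal_pos.2 (pow_pos hRpos d)).ne'
              (Metric.measure_ball_pos volume 0 one_pos).ne'
      _ = volume (B \ {0}) := (measure_diff_null (measure_singleton 0)).symm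
      _ ≤ volume (Function.support Ψ ∩ B) := measure_mono hsub
  have hpos : 0 < M * ∫ z in B, Ψ z := mul_pos hM hposInt
  constructor
  · rw [← hC]
    exact hB2.trans hA
  · rw [← hC]
    exact hpos
end
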